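/- Let k ≥ 1, n ≥ k+1, and let Z be a real n×(k+1) matrix of rank k+1. Then the set {[x] ∈ ℝP^k : v̄ar(Zx) ≥ k} is a closed subset of ℝP^k (equivalently, its complement {[x] : v̄ar(Zx) < k} is open). -/

import Mathlib

open Matrix

/-- The minor of a real `k × n` matrix on a set `S` of `k` columns. -/
noncomputable def minorCols {k n : ℕ} (A : Matrix (Fin k) (Fin n) ℝ)
    (S : Finset (Fin n)) (hS : S.card = k) : ℝ :=
  (A.submatrix id (fun i => ((S.orderIsoOfFin hS) i : Fin n))).det

/-- The minor of a real `n × k` matrix on a set `S` of `k` rows. -/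
noncomputable def minorRows {k n : ℕ} (B : Matrix (Fin n) (Fin k) ℝ)
    (S : Finset (Fin n)) (hS : S.card = k) : ℝ :=
  (B.submatrix (fun i => ((S.orderIsoOfFin hS) i : Fin n)) id).det

/-- A real `k × n` matrix is totally nonnegative if all its maximal (`k × k`) minors
are nonnegative. -/
def IsTotallyNonneg {k n : ℕ} (A : Matrix (Fin k) (Fin n) ℝ) : Prop :=
  ∀ (S : Finset (Fin n)) (hS : S.card = k), 0 ≤ minorCols A S hS

/-- A real `k × n` matrix is totally positive if all its maximal (`k × k`) minors
are strictly positive. -/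
def IsTotallyPos {k n : ℕ} (A : Matrix (Fin k) (Fin n) ℝ) : Prop :=
  ∀ (S : Finset (Fin n)) (hS : S.card = k), 0 < minorCols A S hS

/-- `var v`: the number of sign changes in the sequence `v 0, …, v (n-1)` after the zero
entries are deleted. -/
noncomputable def signVar {n : ℕ} (v : Fin n → ℝ) : ℕ :=
  let l := (List.ofFn v).filter (fun x => x ≠ 0)
  (l.zipWith (· * ·) l.tail).countP (fun x => x < 0)

/-- `v̄ar v`: the maximum of `var w` over all `w` agreeing with `v` in the nonzero entries
of `v`, i.e. the maximal number of sign changes after choosing a sign for each zero entry. -/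
noncomputable def signVarBar {n : ℕ} (v : Fin n → ℝ) : ℕ :=
  sSup {m | ∃ w : Fin n → ℝ, (∀ i, v i ≠ 0 → w i = v i) ∧ m = signVar w}

/-- The quotient topology on a projectivization. -/
noncomputable instance {K V : Type*} [DivisionRing K] [AddCommGroup V] [Module K V]
    [TopologicalSpace V] : TopologicalSpace (Projectivization K V) :=
  inferInstanceAs (TopologicalSpace (Quotient _))

namespace Aux
open List

def Rs (s : SignType) (a b : ℝ) : Prop := SignType.sign a = s * SignType.sign b

lemma forall₂_filter {s : SignType} (hs : s ≠ 0) :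
    ∀ {l l' : List ℝ}, Forall₂ (Rs s) l l' →
      Forall₂ (Rs s) (l.filter (fun x => x ≠ 0)) (l'.filter (fun x => x ≠ 0)) := by
  intro l l' h
  induction h with
  | nil => simp
  | @cons a b l l' hab h ih =>
      have hz : a = 0 ↔ b = 0 := by
        rw [← sign_eq_zero_iff (a := a), ← sign_eq_zero_iff (a := b), hab]
        constructor
        · intro hh
          rcases mul_eq_zero.mp hh with hh | hh
          · exact absurd hh hs
          · exact hh
        · intro hh; rw [hh, mul_zero]
      by_cases ha : a = 0
      · have hb : b = 0 := hz.mp ha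
        simpa [ha, hb] using ih
      · have hb : b ≠ 0 := fun hb => ha (hz.mpr hb)
        simpa [ha, hb] using Forall₂.cons hab ih

lemma forall₂_tail {α β} {R : α → β → Prop} {l l'} (h : Forall₂ R l l') :
    Forall₂ R l.tail l'.tail := by
  cases h with
  | nil => simp
  | cons _ h => simpa using h

lemma forall₂_zipWith {s : SignType} :
    ∀ {a a' b b' : List ℝ}, Forall₂ (Rs s) a a' → Forall₂ (Rs s) b b' →
      Forall₂ (fun x y : ℝ => SignType.sign x = (s*s) * SignType.sign y)
        (zipWith (· * ·) a b) (zipWith (· * ·) a' b') := by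
  intro a a' b b' h
  induction h generalizing b b' with
  | nil => intro _; simp
  | @cons x y a a' hxy h ih =>
      intro hb
      cases hb with
      | nil => simp
      | @cons u v b b' huv hb =>
          refine Forall₂.cons ?_ (ih hb)
          show SignType.sign (x * u) = (s*s) * SignType.sign (y * v)
          rw [sign_mul, sign_mul, hxy, huv, mul_mul_mul_comm]

lemma countP_eq {s : SignType} (hs : s ≠ 0) :
    ∀ {l l' : List ℝ}, Forall₂ (fun x y : ℝ => SignType.sign x = (s*s) * SignType.sign y) l l' →
      l.countP (fun x => x < 0) = l'.countP (fun x => x < 0) := by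
  have hss : s * s = 1 := by
    cases s with
    | zero => exact absurd rfl hs
    | pos => rfl
    | neg => rfl
  intro l l' h
  induction h with
  | nil => rfl
  | @cons a b l l' hab h ih =>
      have : (a < 0) ↔ (b < 0) := by
        rw [← sign_eq_neg_one_iff (a := a), ← sign_eq_neg_one_iff (a := b), hab, hss, one_mul]
      simp only [countP_cons, ih]
      by_cases hb : b < 0
      · simp [hb, this.mpr hb]
      · simp [hb, show ¬ a < 0 from fun h' => hb (this.mp h')]

end Aux

lemma signVar_eq_of_sign {n : ℕ} (s : SignType) (hs : s ≠ 0) (v w : Fin n → ℝ)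
    (h : ∀ i, SignType.sign (v i) = s * SignType.sign (w i)) : signVar v = signVar w := by
  have h0 : List.Forall₂ (Aux.Rs s) (List.ofFn v) (List.ofFn w) := by
    rw [List.forall₂_iff_get]
    refine ⟨by simp, ?_⟩
    intro i h1 h2
    simpa [List.get_ofFn, Aux.Rs] using h _
  have h1 := Aux.forall₂_filter hs h0
  have h2 := Aux.forall₂_zipWith h1 (Aux.forall₂_tail h1)
  exact Aux.countP_eq hs h2

lemma signVar_le {n : ℕ} (w : Fin n → ℝ) : signVar w ≤ n := by
  unfold signVar
  refine le_trans List.countP_le_length ?_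
  rw [List.length_zipWith]
  exact le_trans (le_trans (min_le_left _ _) (List.length_filter_le _ _)) (by simp)

def SV {n : ℕ} (v : Fin n → ℝ) : Set ℕ :=
  {m | ∃ w : Fin n → ℝ, (∀ i, v i ≠ 0 → w i = v i) ∧ m = signVar w}

lemma signVarBar_eq {n : ℕ} (v : Fin n → ℝ) : signVarBar v = sSup (SV v) := rfl

lemma SV_nonempty {n : ℕ} (v : Fin n → ℝ) : (SV v).Nonempty :=
  ⟨signVar v, v, fun _ _ => rfl, rfl⟩

lemma SV_bdd {n : ℕ} (v : Fin n → ℝ) : BddAbove (SV v) := by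
  refine ⟨n, fun m hm => ?_⟩
  obtain ⟨w, -, rfl⟩ := hm
  exact signVar_le w

lemma signVar_smul {n : ℕ} {c : ℝ} (hc : c ≠ 0) (w : Fin n → ℝ) :
    signVar (c • w) = signVar w := by
  refine signVar_eq_of_sign (SignType.sign c) (by simpa using hc) _ _ (fun i => ?_)
  simp only [Pi.smul_apply, smul_eq_mul]
  exact sign_mul c (w i)

lemma SV_subset_smul {n : ℕ} {c : ℝ} (hc : c ≠ 0) (u : Fin n → ℝ) :
    SV u ⊆ SV (c • u) := by
  rintro m ⟨w, hw, rfl⟩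
  refine ⟨c • w, fun i hi => ?_, (signVar_smul hc w).symm⟩
  have hu : u i ≠ 0 := by
    intro h; apply hi; simp [h]
  simp [hw i hu]

lemma signVarBar_smul {n : ℕ} {c : ℝ} (hc : c ≠ 0) (u : Fin n → ℝ) :
    signVarBar (c • u) = signVarBar u := by
  have h1 := SV_subset_smul hc u
  have h2 := SV_subset_smul (inv_ne_zero hc) (c • u)
  rw [inv_smul_smul₀ hc] at h2
  have : SV (c • u) = SV u := le_antisymm h2 h1
  rw [signVarBar_eq, signVarBar_eq, this]

lemma signVarBar_usc {n : ℕ} (v : Fin n → ℝ) :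
    ∃ U : Set (Fin n → ℝ), IsOpen U ∧ v ∈ U ∧ ∀ u ∈ U, signVarBar u ≤ signVarBar v := by
  refine ⟨⋂ i, ({u | 0 < v i → 0 < u i} ∩ {u | v i < 0 → u i < 0}), ?_, ?_, ?_⟩
  · refine isOpen_iInter_of_finite (fun i => IsOpen.inter ?_ ?_)
    · by_cases h : 0 < v i
      · simp only [h, true_implies]
        exact isOpen_lt continuous_const (continuous_apply i)
      · have : {u : Fin n → ℝ | 0 < v i → 0 < u i} = Set.univ := by
          ext u; simp [h]
        rw [this]; exact isOpen_univ
    · by_cases h : v i < 0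
      · simp only [h, true_implies]
        exact isOpen_lt (continuous_apply i) continuous_const
      · have : {u : Fin n → ℝ | v i < 0 → u i < 0} = Set.univ := by
          ext u; simp [h]
        rw [this]; exact isOpen_univ
  · exact Set.mem_iInter.mpr (fun i => ⟨fun h => h, fun h => h⟩)
  · intro u hu
    rw [signVarBar_eq, signVarBar_eq]
    refine csSup_le (SV_nonempty u) ?_
    rintro m ⟨w, hw, rfl⟩
    set w' : Fin n → ℝ := fun i => if v i = 0 then w i else v i with hw'
    have hsign : ∀ i, SignType.sign (w i) = SignType.sign (w' i) := by
      intro i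
      by_cases hv : v i = 0
      · simp [hw', hv]
      · have hcond := Set.mem_iInter.mp hu i
        rcases lt_trichotomy (v i) 0 with h | h | h
        · have hui : u i < 0 := hcond.2 h
          have : w i = u i := hw i (ne_of_lt hui)
          rw [this, hw']
          simp only [hv, if_false]
          rw [sign_neg hui, sign_neg h]
        · exact absurd h hv
        · have hui : 0 < u i := hcond.1 h
          have : w i = u i := hw i (ne_of_gt hui)
          rw [this, hw']
          simp only [hv, if_false]
          rw [sign_pos hui, sign_pos h]
    have heq : signVar w = signVar w' := by
      refine signVar_eq_of_sign 1 (by decide) _ _ (fun i => ?_)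
      rw [one_mul]; exact hsign i
    rw [heq]
    exact le_csSup (SV_bdd v) ⟨w', fun i hi => by simp [hw', hi], rfl⟩

lemma closed_vec {k n : ℕ} (hkn : k ≤ n) (Z : Matrix (Fin n) (Fin k) ℝ) (c : ℕ) :
    IsClosed {x : Fin k → ℝ | c ≤ signVarBar (Z.mulVec x)} := by
  rw [← isOpen_compl_iff]
  rw [isOpen_iff_mem_nhds]
  intro x hx
  simp only [Set.mem_compl_iff, Set.mem_setOf_eq, not_le] at hx
  obtain ⟨U, hUo, hUv, hUle⟩ := signVarBar_usc (Z.mulVec x)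
  have hcont : Continuous fun y : Fin k → ℝ => Z.mulVec y := by
    have := (Matrix.mulVecLin Z).continuous_of_finiteDimensional
    exact this
  refine Filter.mem_of_superset ((hUo.preimage hcont).mem_nhds hUv) ?_
  intro y hy
  simp only [Set.mem_compl_iff, Set.mem_setOf_eq, not_le]
  exact lt_of_le_of_lt (hUle _ hy) hx

/-- For `Z` of rank `k+1`, the set `{[x] ∈ ℝP^k : v̄ar(Zx) ≥ k}` is closed.
(Membership is tested on the chosen representative `P.rep`; since `v̄ar(Zx)` is invariant
under nonzero rescaling of `x`, this defines the intended set.) -/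
theorem stmt12 (k n : ℕ) (hk : 1 ≤ k) (hn : k + 1 ≤ n)
    (Z : Matrix (Fin n) (Fin (k + 1)) ℝ) (hZ : Z.rank = k + 1) :
    IsClosed {P : Projectivization ℝ (Fin (k + 1) → ℝ) |
      k ≤ signVarBar (Z.mulVec P.rep)} := by
  have key := closed_vec hn Z k
  have hq : Topology.IsQuotientMap
      (Projectivization.mk' ℝ : { v : Fin (k+1) → ℝ // v ≠ 0 } → Projectivization ℝ (Fin (k+1) → ℝ)) :=
    isQuotientMap_quot_mk
  rw [← hq.isClosed_preimage]
  have : (Projectivization.mk' ℝ : { v : Fin (k+1) → ℝ // v ≠ 0 } → Projectivization ℝ (Fin (k+1) → ℝ)) ⁻¹'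
      {P | k ≤ signVarBar (Z.mulVec P.rep)}
      = Subtype.val ⁻¹' {x : Fin (k+1) → ℝ | k ≤ signVarBar (Z.mulVec x)} := by
    ext v
    simp only [Set.mem_preimage, Set.mem_setOf_eq]
    have hP : (Projectivization.mk' ℝ v : Projectivization ℝ (Fin (k+1) → ℝ)) =
        Projectivization.mk ℝ v.1 v.2 := rfl
    set P : Projectivization ℝ (Fin (k+1) → ℝ) := Projectivization.mk' ℝ v with hPdef
    have h1 : Projectivization.mk ℝ P.rep P.rep_nonzero = Projectivization.mk ℝ v.1 v.2 := by
      rw [Projectivization.mk_rep, hP]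
    obtain ⟨a, ha⟩ := (Projectivization.mk_eq_mk_iff ℝ _ _ _ _).mp h1
    have hrep : P.rep = (a : ℝ) • v.1 := by rw [← ha]; simp [Units.smul_def]
    rw [hrep, Matrix.mulVec_smul, signVarBar_smul a.ne_zero]
  rw [this]
  exact key.preimage continuous_subtype_val
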